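/- The partial involution f_C realizes the exchange combinator C: for all partial injective functions a, b, c on T, ((f_C • a) • b) • c = (a • c) • b. -/

import Mathlib

/-- Ground terms over the signature Σ = {ε, l, r, p}. -/
inductive T : Type
  | eps : T
  | l : T → T
  | r : T → T
  | p : T → T → T
  deriving DecidableEq

/-- A relation is functional. -/
def Fnal {α : Type*} (f : α → α → Prop) : Prop :=
  ∀ x y z, f x y → f x z → y = z

/-- A relation is injective. -/
def Inj {α : Type*} (f : α → α → Prop) : Prop :=
  ∀ x y z, f x z → f y z → x = y

/-- A partial injective function on `T`, viewed as a relation. -/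
def PartialInjection (f : T → T → Prop) : Prop := Fnal f ∧ Inj f

/-- A partial involution on `T`: a partial injective function that is symmetric. -/
def PartialInvolution (f : T → T → Prop) : Prop :=
  PartialInjection f ∧ ∀ x y, f x y → f y x

/-- Replication: `!f = {(p(t,u), p(t,v)) | t ∈ T, (u,v) ∈ f}`. -/
def Repl (f : T → T → Prop) : T → T → Prop :=
  fun a b => ∃ t u v, f u v ∧ a = T.p t u ∧ b = T.p t v

/-- Relational composition: `(u,w) ∈ f ; g` iff `∃ v, (u,v) ∈ f ∧ (v,w) ∈ g`. -/
def RComp (f g : T → T → Prop) : T → T → Prop :=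
  fun u w => ∃ v, f u v ∧ g v w

/-- Linear application:
`f • g = f_rr ∪ (f_rl ; g ; (f_ll ; g)* ; f_lr)` where
`f_ij = {(u,v) | (i(u), j(v)) ∈ f}` for `i, j ∈ {l, r}`. -/
def LApp (f g : T → T → Prop) : T → T → Prop :=
  fun u v =>
    f (T.r u) (T.r v) ∨
    RComp (fun a b => f (T.r a) (T.l b))
      (RComp g
        (RComp (Relation.ReflTransGen (RComp (fun a b => f (T.l a) (T.l b)) g))
          (fun a b => f (T.l a) (T.r b)))) u v

/-- The partial involution realizing the exchange combinator `C`: the symmetric closure of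
`{(l(l(t)), r(r(l(t))))} ∪ {(l(r(l(t))), r(l(t)))} ∪ {(l(r(r(t))), r(r(r(t))))}`. -/
def fC : T → T → Prop := fun a b =>
  (∃ t, a = T.l (T.l t) ∧ b = T.r (T.r (T.l t))) ∨
  (∃ t, a = T.r (T.r (T.l t)) ∧ b = T.l (T.l t)) ∨
  (∃ t, a = T.l (T.r (T.l t)) ∧ b = T.r (T.l t)) ∨
  (∃ t, a = T.r (T.l t) ∧ b = T.l (T.r (T.l t))) ∨
  (∃ t, a = T.l (T.r (T.r t)) ∧ b = T.r (T.r (T.r t))) ∨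
  (∃ t, a = T.r (T.r (T.r t)) ∧ b = T.l (T.r (T.r t)))


namespace CAux

open Relation

/-- Step relation transported along an embedding `e`. -/
def SRel (e : T → T) (g : T → T → Prop) : T → T → Prop :=
  fun x y => ∃ x' y', x = e x' ∧ y = e y' ∧ g x' y'

/-- `a` followed by a star of `(s ; a)` loops. -/
def Pstar (a s : T → T → Prop) : T → T → Prop :=
  RComp a (ReflTransGen (RComp s a))

theorem rcomp_assoc (f g h : T → T → Prop) :
    RComp (RComp f g) h = RComp f (RComp g h) := by
  funext u w
  apply propext
  constructor
  · rintro ⟨v, ⟨m, h1, h2⟩, h3⟩; exact ⟨m, h1, v, h2, h3⟩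
  · rintro ⟨m, h1, v, h2, h3⟩; exact ⟨v, ⟨m, h1, h2⟩, h3⟩

theorem kleene (x y : T → T → Prop) :
    RComp (ReflTransGen x) (ReflTransGen (RComp y (ReflTransGen x))) =
      ReflTransGen (fun p q => x p q ∨ y p q) := by
  funext u v
  apply propext
  constructor
  · rintro ⟨m, hm, h2⟩
    have hx : ∀ p q : T, ReflTransGen x p q →
        ReflTransGen (fun p q => x p q ∨ y p q) p q :=
      fun p q h => ReflTransGen.mono (fun p q h => Or.inl h) _ _ h
    refine (hx u m hm).trans ?_
    induction h2 with
    | refl => exact .refl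
    | tail _ h ih =>
        obtain ⟨k, hk, hk2⟩ := h
        exact ih.trans (ReflTransGen.head (Or.inr hk) (hx _ _ hk2))
  · intro h
    induction h using ReflTransGen.head_induction_on with
    | refl => exact ⟨v, .refl, .refl⟩
    | head hstep _ ih =>
        obtain ⟨k, hk1, hk2⟩ := ih
        rcases hstep with hx1 | hy1
        · exact ⟨k, ReflTransGen.head hx1 hk1, hk2⟩
        · exact ⟨_, ReflTransGen.refl, ReflTransGen.head ⟨_, hy1, hk1⟩ hk2⟩

theorem collapse (a s t : T → T → Prop) :
    Pstar (Pstar a s) t =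
      RComp a (ReflTransGen (fun p q => RComp s a p q ∨ RComp t a p q)) := by
  show RComp (RComp a (ReflTransGen (RComp s a)))
      (ReflTransGen (RComp t (RComp a (ReflTransGen (RComp s a))))) = _
  rw [← rcomp_assoc t a, rcomp_assoc, kleene]

/-- Flattening a chain into star form. -/
theorem gfwd (A g : T → T → Prop) (e : T → T) :
    ∀ p z : T, ReflTransGen (fun p q => ∃ m, A (e p) (e m) ∧ g m q) p z →
      ∀ y, A (e z) y → ∀ x1, g x1 p →
        ReflTransGen (RComp (SRel e g) A) (e x1) y := by
  intro p z h
  induction h using ReflTransGen.head_induction_on with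
  | refl =>
      intro y hy x1 hg
      exact ReflTransGen.single ⟨_, ⟨x1, _, rfl, rfl, hg⟩, hy⟩
  | head hstep _ ih =>
      intro y hy x1 hg
      obtain ⟨m', hA, hg'⟩ := hstep
      exact ReflTransGen.head ⟨_, ⟨x1, _, rfl, rfl, hg⟩, hA⟩ (ih y hy m' hg')

/-- Unflattening a star into a chain. -/
theorem gbwd (A g : T → T → Prop) (e : T → T) :
    ∀ z0 y : T, ReflTransGen (RComp (SRel e g) A) z0 y →
      z0 = y ∨ ∃ x1 p z, z0 = e x1 ∧ g x1 p ∧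
        ReflTransGen (fun p q => ∃ m, A (e p) (e m) ∧ g m q) p z ∧ A (e z) y := by
  intro z0 y h
  induction h using ReflTransGen.head_induction_on with
  | refl => exact Or.inl rfl
  | head hstep _ ih =>
      obtain ⟨mid, ⟨x1, y1, rfl, rfl, hg⟩, hA⟩ := hstep
      rcases ih with rfl | ⟨x2, p2, z2, rfl, hg2, hK, hA2⟩
      · exact Or.inr ⟨x1, y1, y1, rfl, hg, ReflTransGen.refl, hA⟩
      · exact Or.inr ⟨x1, y1, z2, rfl, hg, ReflTransGen.head ⟨x2, hA, hg2⟩ hK, hA2⟩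

def Sig : T → T → Prop := fun u x =>
  (∃ t, u = T.l t ∧ x = T.r (T.l t)) ∨
  (∃ t, u = T.r (T.l t) ∧ x = T.l t) ∨
  (∃ t, u = T.r (T.r t) ∧ x = T.r (T.r t))

def Rho : T → T → Prop := fun u x =>
  (∃ t, u = T.l t ∧ x = T.l t) ∨ (∃ t, u = T.r t ∧ x = T.r (T.r t))

theorem fC_rr (u v : T) : ¬ fC (T.r u) (T.r v) := by
  rintro (⟨t, h1, h2⟩ | ⟨t, h1, h2⟩ | ⟨t, h1, h2⟩ | ⟨t, h1, h2⟩ | ⟨t, h1, h2⟩ | ⟨t, h1, h2⟩) <;>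
    simp_all

theorem fC_ll (u v : T) : ¬ fC (T.l u) (T.l v) := by
  rintro (⟨t, h1, h2⟩ | ⟨t, h1, h2⟩ | ⟨t, h1, h2⟩ | ⟨t, h1, h2⟩ | ⟨t, h1, h2⟩ | ⟨t, h1, h2⟩) <;>
    simp_all

theorem fC_rl (u v : T) : fC (T.r u) (T.l v) ↔ Sig u v := by
  unfold fC Sig
  constructor
  · rintro (⟨t, h1, h2⟩ | ⟨t, h1, h2⟩ | ⟨t, h1, h2⟩ | ⟨t, h1, h2⟩ | ⟨t, h1, h2⟩ | ⟨t, h1, h2⟩) <;>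
      simp_all
  · rintro (⟨t, h1, h2⟩ | ⟨t, h1, h2⟩ | ⟨t, h1, h2⟩) <;> subst h1 <;> subst h2 <;> simp

theorem fC_lr (u v : T) : fC (T.l v) (T.r u) ↔ Sig u v := by
  unfold fC Sig
  constructor
  · rintro (⟨t, h1, h2⟩ | ⟨t, h1, h2⟩ | ⟨t, h1, h2⟩ | ⟨t, h1, h2⟩ | ⟨t, h1, h2⟩ | ⟨t, h1, h2⟩) <;>
      simp_all
  · rintro (⟨t, h1, h2⟩ | ⟨t, h1, h2⟩ | ⟨t, h1, h2⟩) <;> subst h1 <;> subst h2 <;> simp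

theorem sig_r (u x : T) : Sig (T.r u) x ↔ Rho u x := by
  unfold Sig Rho
  constructor
  · rintro (⟨t, h1, h2⟩ | ⟨t, h1, h2⟩ | ⟨t, h1, h2⟩) <;> simp_all
  · rintro (⟨t, h1, h2⟩ | ⟨t, h1, h2⟩) <;> subst h1 <;> subst h2 <;> simp

theorem sig_l (u x : T) : Sig (T.l u) x ↔ x = T.r (T.l u) := by
  unfold Sig
  constructor
  · rintro (⟨t, h1, h2⟩ | ⟨t, h1, h2⟩ | ⟨t, h1, h2⟩) <;> simp_all
  · rintro rfl; exact Or.inl ⟨u, rfl, rfl⟩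

theorem rho_r (u x : T) : Rho (T.r u) x ↔ x = T.r (T.r u) := by
  unfold Rho
  constructor
  · rintro (⟨t, h1, h2⟩ | ⟨t, h1, h2⟩) <;> simp_all
  · rintro rfl; exact Or.inr ⟨u, rfl, rfl⟩

theorem rho_l (u x : T) : Rho (T.l u) x ↔ x = T.l u := by
  unfold Rho
  constructor
  · rintro (⟨t, h1, h2⟩ | ⟨t, h1, h2⟩) <;> simp_all
  · rintro rfl; exact Or.inl ⟨u, rfl, rfl⟩

theorem rtg_empty {R : T → T → Prop} (hR : ∀ x y, ¬ R x y) {u v : T}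
    (h : ReflTransGen R u v) : u = v := by
  induction h with
  | refl => rfl
  | tail _ h2 _ => exact absurd h2 (hR _ _)

theorem lappfC (a : T → T → Prop) (u v : T) :
    LApp fC a u v ↔ ∃ x y, Sig u x ∧ a x y ∧ Sig v y := by
  simp only [LApp, RComp]
  constructor
  · rintro (h | ⟨x, hx, y, hy, m, hm, hend⟩)
    · exact absurd h (fC_rr u v)
    · have hym : y = m :=
        rtg_empty (fun p q => by rintro ⟨k, hk, -⟩; exact fC_ll _ _ hk) hm
      subst hym
      exact ⟨x, y, (fC_rl u x).1 hx, hy, (fC_lr v y).1 hend⟩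
  · rintro ⟨x, y, hx, hxy, hy⟩
    exact Or.inr ⟨x, (fC_rl u x).2 hx, y, hxy, y, ReflTransGen.refl, (fC_lr v y).2 hy⟩

theorem A_rr (a : T → T → Prop) (u v : T) :
    LApp fC a (T.r u) (T.r v) ↔ ∃ x y, Rho u x ∧ a x y ∧ Rho v y := by
  rw [lappfC]
  constructor
  · rintro ⟨x, y, hx, hxy, hy⟩
    exact ⟨x, y, (sig_r u x).1 hx, hxy, (sig_r v y).1 hy⟩
  · rintro ⟨x, y, hx, hxy, hy⟩
    exact ⟨x, y, (sig_r u x).2 hx, hxy, (sig_r v y).2 hy⟩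

theorem A_rl (a : T → T → Prop) (u v : T) :
    LApp fC a (T.r u) (T.l v) ↔ ∃ x, Rho u x ∧ a x (T.r (T.l v)) := by
  rw [lappfC]
  constructor
  · rintro ⟨x, y, hx, hxy, hy⟩
    rw [sig_l] at hy
    subst hy
    exact ⟨x, (sig_r u x).1 hx, hxy⟩
  · rintro ⟨x, hx, hxy⟩
    exact ⟨x, _, (sig_r u x).2 hx, hxy, (sig_l v _).2 rfl⟩

theorem A_ll (a : T → T → Prop) (u v : T) :
    LApp fC a (T.l u) (T.l v) ↔ a (T.r (T.l u)) (T.r (T.l v)) := by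
  rw [lappfC]
  constructor
  · rintro ⟨x, y, hx, hxy, hy⟩
    rw [sig_l] at hx hy
    subst hx; subst hy; exact hxy
  · intro h
    exact ⟨_, _, (sig_l u _).2 rfl, h, (sig_l v _).2 rfl⟩

theorem A_lr (a : T → T → Prop) (u v : T) :
    LApp fC a (T.l u) (T.r v) ↔ ∃ y, a (T.r (T.l u)) y ∧ Rho v y := by
  rw [lappfC]
  constructor
  · rintro ⟨x, y, hx, hxy, hy⟩
    rw [sig_l] at hx
    subst hx
    exact ⟨y, hxy, (sig_r v y).1 hy⟩
  · rintro ⟨y, hxy, hy⟩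
    exact ⟨_, y, (sig_l u _).2 rfl, hxy, (sig_r v y).2 hy⟩

theorem lemB (a b : T → T → Prop) (u v : T) :
    LApp (LApp fC a) b u v ↔
      ∃ x y, Rho u x ∧ Rho v y ∧ Pstar a (SRel (fun t => T.r (T.l t)) b) x y := by
  constructor
  · intro h
    rcases h with h | h
    · obtain ⟨x, y, hx, hxy, hy⟩ := (A_rr a u v).1 h
      exact ⟨x, y, hx, hy, y, hxy, ReflTransGen.refl⟩
    · obtain ⟨x1, h1, y1, hb1, z, hK, h2⟩ := h
      obtain ⟨x, hRu, hax1⟩ := (A_rl a u x1).1 h1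
      obtain ⟨y, haz, hRv⟩ := (A_lr a z v).1 h2
      have hK' : ReflTransGen
          (fun p q => ∃ m, a (T.r (T.l p)) (T.r (T.l m)) ∧ b m q) y1 z := by
        refine ReflTransGen.mono ?_ _ _ hK
        rintro p q ⟨m, hA, hbm⟩
        exact ⟨m, (A_ll a p m).1 hA, hbm⟩
      exact ⟨x, y, hRu, hRv, _,
        hax1, gfwd a b (fun t => T.r (T.l t)) y1 z hK' y haz x1 hb1⟩
  · rintro ⟨x, y, hRu, hRv, z0, haz0, hstar⟩
    rcases gbwd a b (fun t => T.r (T.l t)) z0 y hstar with rfl | ⟨x1, p, z, rfl, hb1, hK, hAz⟩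
    · exact Or.inl ((A_rr a u v).2 ⟨x, z0, hRu, haz0, hRv⟩)
    · refine Or.inr ⟨x1, (A_rl a u x1).2 ⟨x, hRu, haz0⟩, p, hb1, z, ?_, (A_lr a z v).2 ⟨y, hAz, hRv⟩⟩
      refine ReflTransGen.mono ?_ _ _ hK
      rintro p' q' ⟨m, hA, hbm⟩
      exact ⟨m, (A_ll a p' m).2 hA, hbm⟩

theorem B_rr (a b : T → T → Prop) (u v : T) :
    LApp (LApp fC a) b (T.r u) (T.r v) ↔
      Pstar a (SRel (fun t => T.r (T.l t)) b) (T.r (T.r u)) (T.r (T.r v)) := by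
  rw [lemB]
  constructor
  · rintro ⟨x, y, hx, hy, h⟩
    rw [rho_r] at hx hy
    subst hx; subst hy; exact h
  · intro h
    exact ⟨_, _, (rho_r u _).2 rfl, (rho_r v _).2 rfl, h⟩

theorem B_rl (a b : T → T → Prop) (u v : T) :
    LApp (LApp fC a) b (T.r u) (T.l v) ↔
      Pstar a (SRel (fun t => T.r (T.l t)) b) (T.r (T.r u)) (T.l v) := by
  rw [lemB]
  constructor
  · rintro ⟨x, y, hx, hy, h⟩
    rw [rho_r] at hx
    rw [rho_l] at hy
    subst hx; subst hy; exact h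
  · intro h
    exact ⟨_, _, (rho_r u _).2 rfl, (rho_l v _).2 rfl, h⟩

theorem B_ll (a b : T → T → Prop) (u v : T) :
    LApp (LApp fC a) b (T.l u) (T.l v) ↔
      Pstar a (SRel (fun t => T.r (T.l t)) b) (T.l u) (T.l v) := by
  rw [lemB]
  constructor
  · rintro ⟨x, y, hx, hy, h⟩
    rw [rho_l] at hx hy
    subst hx; subst hy; exact h
  · intro h
    exact ⟨_, _, (rho_l u _).2 rfl, (rho_l v _).2 rfl, h⟩

theorem B_lr (a b : T → T → Prop) (u v : T) :
    LApp (LApp fC a) b (T.l u) (T.r v) ↔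
      Pstar a (SRel (fun t => T.r (T.l t)) b) (T.l u) (T.r (T.r v)) := by
  rw [lemB]
  constructor
  · rintro ⟨x, y, hx, hy, h⟩
    rw [rho_l] at hx
    rw [rho_r] at hy
    subst hx; subst hy; exact h
  · intro h
    exact ⟨_, _, (rho_l u _).2 rfl, (rho_r v _).2 rfl, h⟩

theorem lemC (a b c : T → T → Prop) (u v : T) :
    LApp (LApp (LApp fC a) b) c u v ↔
      Pstar (Pstar a (SRel (fun t => T.r (T.l t)) b)) (SRel T.l c)
        (T.r (T.r u)) (T.r (T.r v)) := by
  set Pb := Pstar a (SRel (fun t => T.r (T.l t)) b) with hPb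
  constructor
  · intro h
    rcases h with h | h
    · exact ⟨_, (B_rr a b u v).1 h, ReflTransGen.refl⟩
    · obtain ⟨x1, h1, y1, hc1, z, hK, h2⟩ := h
      have h1' := (B_rl a b u x1).1 h1
      have h2' := (B_lr a b z v).1 h2
      have hK' : ReflTransGen (fun p q => ∃ m, Pb (T.l p) (T.l m) ∧ c m q) y1 z := by
        refine ReflTransGen.mono ?_ _ _ hK
        rintro p q ⟨m, hB, hcm⟩
        exact ⟨m, (B_ll a b p m).1 hB, hcm⟩
      exact ⟨T.l x1, h1', gfwd Pb c T.l y1 z hK' _ h2' x1 hc1⟩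
  · rintro ⟨z0, h1, hstar⟩
    rcases gbwd Pb c T.l z0 _ hstar with rfl | ⟨x1, p, z, rfl, hc1, hK, hPz⟩
    · exact Or.inl ((B_rr a b u v).2 h1)
    · refine Or.inr ⟨x1, (B_rl a b u x1).2 h1, p, hc1, z, ?_, (B_lr a b z v).2 hPz⟩
      refine ReflTransGen.mono ?_ _ _ hK
      rintro p' q' ⟨m, hB, hcm⟩
      exact ⟨m, (B_ll a b p' m).2 hB, hcm⟩

theorem lemD (a c : T → T → Prop) (u v : T) :
    LApp a c u v ↔ Pstar a (SRel T.l c) (T.r u) (T.r v) := by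
  constructor
  · intro h
    rcases h with h | h
    · exact ⟨_, h, ReflTransGen.refl⟩
    · obtain ⟨x1, h1, y1, hc1, z, hK, h2⟩ := h
      have hK' : ReflTransGen (fun p q => ∃ m, a (T.l p) (T.l m) ∧ c m q) y1 z := by
        refine ReflTransGen.mono ?_ _ _ hK
        rintro p q ⟨m, hA, hcm⟩
        exact ⟨m, hA, hcm⟩
      exact ⟨T.l x1, h1, gfwd a c T.l y1 z hK' _ h2 x1 hc1⟩
  · rintro ⟨z0, h1, hstar⟩
    rcases gbwd a c T.l z0 _ hstar with rfl | ⟨x1, p, z, rfl, hc1, hK, hPz⟩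
    · exact Or.inl h1
    · refine Or.inr ⟨x1, h1, p, hc1, z, ?_, hPz⟩
      refine ReflTransGen.mono ?_ _ _ hK
      rintro p' q' ⟨m, hA, hcm⟩
      exact ⟨m, hA, hcm⟩

theorem lemE (a b c : T → T → Prop) (u v : T) :
    LApp (LApp a c) b u v ↔
      Pstar (Pstar a (SRel T.l c)) (SRel (fun t => T.r (T.l t)) b)
        (T.r (T.r u)) (T.r (T.r v)) := by
  set Pc := Pstar a (SRel T.l c) with hPc
  constructor
  · intro h
    rcases h with h | h
    · exact ⟨_, (lemD a c (T.r u) (T.r v)).1 h, ReflTransGen.refl⟩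
    · obtain ⟨x1, h1, y1, hb1, z, hK, h2⟩ := h
      have h1' := (lemD a c (T.r u) (T.l x1)).1 h1
      have h2' := (lemD a c (T.l z) (T.r v)).1 h2
      have hK' : ReflTransGen
          (fun p q => ∃ m, Pc (T.r (T.l p)) (T.r (T.l m)) ∧ b m q) y1 z := by
        refine ReflTransGen.mono ?_ _ _ hK
        rintro p q ⟨m, hD, hbm⟩
        exact ⟨m, (lemD a c (T.l p) (T.l m)).1 hD, hbm⟩
      exact ⟨T.r (T.l x1), h1', gfwd Pc b (fun t => T.r (T.l t)) y1 z hK' _ h2' x1 hb1⟩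
  · rintro ⟨z0, h1, hstar⟩
    rcases gbwd Pc b (fun t => T.r (T.l t)) z0 _ hstar with
      rfl | ⟨x1, p, z, rfl, hb1, hK, hPz⟩
    · exact Or.inl ((lemD a c (T.r u) (T.r v)).2 h1)
    · refine Or.inr ⟨x1, (lemD a c (T.r u) (T.l x1)).2 h1, p, hb1, z, ?_,
        (lemD a c (T.l z) (T.r v)).2 hPz⟩
      refine ReflTransGen.mono ?_ _ _ hK
      rintro p' q' ⟨m, hD, hbm⟩
      exact ⟨m, (lemD a c (T.l p') (T.l m)).2 hD, hbm⟩

end CAux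

/-- `f_C` realizes the exchange combinator: `((f_C • a) • b) • c = (a • c) • b`. -/
theorem fC_realizes_C (a b c : T → T → Prop)
    (ha : PartialInjection a) (hb : PartialInjection b) (hc : PartialInjection c) :
    LApp (LApp (LApp fC a) b) c = LApp (LApp a c) b := by
  funext u v
  apply propext
  rw [CAux.lemC a b c u v, CAux.lemE a b c u v, CAux.collapse, CAux.collapse]
  have : (fun p q => RComp (CAux.SRel (fun t => T.r (T.l t)) b) a p q ∨
      RComp (CAux.SRel T.l c) a p q) =
      (fun p q => RComp (CAux.SRel T.l c) a p q ∨
        RComp (CAux.SRel (fun t => T.r (T.l t)) b) a p q) := by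
    funext p q
    exact propext or_comm
  rw [this]
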